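/- Lieb-type interpolation: let (X, μ) be a measure space and F, G : X → ℍ measurable with ‖FG‖_{∞} ≤ M and ‖FG‖₁ ≤ N < ∞. Then for every p ∈ [1, ∞), FG ∈ Lᵖ(μ) and ‖FG‖_p ≤ M^{1 − 1/p} N^{1/p}. Applied with M = ‖f‖₂‖g‖₂‖φ‖₂‖ψ‖₂ and N = sqrt(C_φ C_ψ)‖f‖₂‖g‖₂, this gives ‖SH_φ f · SH_ψ g‖_{p,μ} ≤ (C_φ C_ψ)^{1/(2p)} ‖f‖₂‖g‖₂ (‖φ‖₂‖ψ‖₂)^{1 − 1/p}. -/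

import Mathlib

open MeasureTheory

theorem lieb_interpolation {X : Type*} [MeasurableSpace X] (μ : Measure X)
    (F G : X → Quaternion ℝ)
    (hm : AEStronglyMeasurable (fun x => F x * G x) μ)
    (M N : ℝ) (hM : 0 ≤ M) (hN : 0 ≤ N)
    (hInf : eLpNorm (fun x => F x * G x) ⊤ μ ≤ ENNReal.ofReal M)
    (h1 : eLpNorm (fun x => F x * G x) 1 μ ≤ ENNReal.ofReal N)
    (p : ℝ) (hp : 1 ≤ p) :
    MemLp (fun x => F x * G x) (ENNReal.ofReal p) μ ∧
    eLpNorm (fun x => F x * G x) (ENNReal.ofReal p) μ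
      ≤ ENNReal.ofReal (M ^ (1 - 1/p) * N ^ (1/p)) := by
  set H : X → Quaternion ℝ := fun x => F x * G x with hH
  have hp0 : 0 < p := lt_of_lt_of_le one_pos hp
  have hp1 : 0 ≤ p - 1 := by linarith
  have hpne : ENNReal.ofReal p ≠ 0 := by
    simp [ENNReal.ofReal_eq_zero, not_le, hp0]
  have hptop : ENNReal.ofReal p ≠ ⊤ := ENNReal.ofReal_ne_top
  have hae : ∀ᵐ x ∂μ, (‖H x‖₊ : ENNReal) ≤ ENNReal.ofReal M := by
    have := ae_le_eLpNormEssSup (f := H) (μ := μ)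
    rw [eLpNorm_exponent_top] at hInf
    filter_upwards [this] with x hx using hx.trans hInf
  have hlint : ∫⁻ x, (‖H x‖₊ : ENNReal) ^ p ∂μ
      ≤ ENNReal.ofReal M ^ (p - 1) * ENNReal.ofReal N := by
    have step1 : ∫⁻ x, (‖H x‖₊ : ENNReal) ^ p ∂μ
        ≤ ∫⁻ x, ENNReal.ofReal M ^ (p - 1) * (‖H x‖₊ : ENNReal) ∂μ := by
      refine lintegral_mono_ae ?_
      filter_upwards [hae] with x hx
      have heq : (‖H x‖₊ : ENNReal) ^ p
          = (‖H x‖₊ : ENNReal) ^ (p - 1) * (‖H x‖₊ : ENNReal) := by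
        nth_rewrite 1 [show p = (p - 1) + 1 by ring]
        rw [ENNReal.rpow_add_of_nonneg _ _ hp1 zero_le_one, ENNReal.rpow_one]
      rw [heq]
      exact mul_le_mul_left (ENNReal.rpow_le_rpow hx hp1) _
    have step2 : ∫⁻ x, ENNReal.ofReal M ^ (p - 1) * (‖H x‖₊ : ENNReal) ∂μ
        = ENNReal.ofReal M ^ (p - 1) * ∫⁻ x, (‖H x‖₊ : ENNReal) ∂μ := by
      exact lintegral_const_mul' _ _ (by
        exact ENNReal.rpow_ne_top_of_nonneg hp1 ENNReal.ofReal_ne_top)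
    rw [eLpNorm_one_eq_lintegral_enorm] at h1
    calc ∫⁻ x, (‖H x‖₊ : ENNReal) ^ p ∂μ
        ≤ ENNReal.ofReal M ^ (p - 1) * ∫⁻ x, (‖H x‖₊ : ENNReal) ∂μ := step1.trans step2.le
      _ ≤ ENNReal.ofReal M ^ (p - 1) * ENNReal.ofReal N := mul_le_mul_right h1 _
  have hkey : eLpNorm H (ENNReal.ofReal p) μ
      ≤ ENNReal.ofReal (M ^ (1 - 1/p) * N ^ (1/p)) := by
    rw [eLpNorm_eq_lintegral_rpow_enorm_toReal hpne hptop]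
    rw [ENNReal.toReal_ofReal hp0.le]
    calc (∫⁻ x, (‖H x‖₊ : ENNReal) ^ p ∂μ) ^ (1 / p)
        ≤ (ENNReal.ofReal M ^ (p - 1) * ENNReal.ofReal N) ^ (1 / p) :=
          ENNReal.rpow_le_rpow hlint (by positivity)
      _ = ENNReal.ofReal (M ^ (1 - 1/p) * N ^ (1/p)) := by
          rw [ENNReal.ofReal_rpow_of_nonneg hM hp1,
            ← ENNReal.ofReal_mul (by positivity),
            ENNReal.ofReal_rpow_of_nonneg (by positivity) (by positivity)]
          congr 1
          rw [Real.mul_rpow (by positivity) hN, ← Real.rpow_mul hM]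
          congr 2
          field_simp
  refine ⟨⟨hm, lt_of_le_of_lt hkey ENNReal.ofReal_lt_top⟩, hkey⟩
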